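/- Let ξ be an ℝ^m-valued random vector with law P, let ε, δ ∈ (0,1), let g = (g_j)_{j=1,…,l} with each g_j(x;·) : ℝ^m → ℝ measurable, b ∈ ℝ^l, k ∈ ℝ^l with k_j > 0 for all j, and f : ℝ^d → ℝ. Let x̂ ∈ ℝ^d be given, let q_{1−ε} be the (1−ε)-quantile of max_j (g_j(x̂;ξ) − b_j)/k_j, and let ρ : Ω₂ → ℝ (on a probability space (Ω₂,ℱ₂,P₂) modeling Phase 2 data) satisfy P₂(q_{1−ε} ≤ ρ) ≥ 1−δ. Let x̃ : Ω₂ → ℝ^d be such that for each ω, x̃(ω) is an optimal solution of the reconstructed robust problem: minimize f(x) subject to 'g_j(x;z) ≤ b_j for all j, for every z with g_j(x̂;z) ≤ b_j + ρ(ω) k_j for all j' (assuming measurability of ω ↦ P(g_j(x̃(ω);ξ) ≤ b_j for all j)). Then: (a) P₂( P(g_j(x̃(ω);ξ) ≤ b_j for all j) ≥ 1−ε ) ≥ 1−δ; and (b) for every ω with ρ(ω) ≤ 0, x̂ is feasible for the reconstructed robust problem and hence f(x̃(ω)) ≤ f(x̂). -/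

import Mathlib

open MeasureTheory

/-- improvement from reconstruction under statistical confidence: if `ρ` is
a `1-δ` confidence upper bound for the `(1-ε)`-quantile of `max_j (g_j(x̂;ξ)−b_j)/k_j` and
`x̃(ω)` is an optimal solution of the reconstructed robust problem for each Phase 2
realization `ω`, then (a) `x̃` is chance-feasible with confidence `1-δ`, and (b) whenever
`ρ(ω) ≤ 0`, `x̂` is feasible for the reconstructed robust problem and `f(x̃(ω)) ≤ f(x̂)`. -/
theorem reconstruction_improvement_confidence
    {m d l : ℕ} (hl : 0 < l)
    {Ω Ω₂ : Type*} [MeasurableSpace Ω] [MeasurableSpace Ω₂]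
    (P : Measure Ω) [IsProbabilityMeasure P]
    (P₂ : Measure Ω₂) [IsProbabilityMeasure P₂]
    (ξ : Ω → (Fin m → ℝ)) (hξ : Measurable ξ)
    (ε δ : ℝ) (hε : ε ∈ Set.Ioo (0 : ℝ) 1) (hδ : δ ∈ Set.Ioo (0 : ℝ) 1)
    (g : (Fin d → ℝ) → (Fin m → ℝ) → Fin l → ℝ)
    (hg : ∀ (x : Fin d → ℝ) (j : Fin l), Measurable fun z => g x z j)
    (b k : Fin l → ℝ) (hk : ∀ j, 0 < k j)
    (f : (Fin d → ℝ) → ℝ)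
    (xhat : Fin d → ℝ)
    (q : ℝ)
    (hq : q = sInf {t : ℝ | ENNReal.ofReal (1 - ε) ≤
      P {ω | (⨆ j : Fin l, (g xhat (ξ ω) j - b j) / k j) ≤ t}})
    (ρ : Ω₂ → ℝ) (hρmeas : Measurable ρ)
    (hρ : ENNReal.ofReal (1 - δ) ≤ P₂ {ω₂ | q ≤ ρ ω₂})
    (xtilde : Ω₂ → (Fin d → ℝ))
    (hopt : ∀ ω₂ : Ω₂,
      (∀ z : Fin m → ℝ,
        (∀ j, g xhat z j ≤ b j + ρ ω₂ * k j) → ∀ j, g (xtilde ω₂) z j ≤ b j) ∧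
      (∀ x : Fin d → ℝ,
        (∀ z : Fin m → ℝ,
          (∀ j, g xhat z j ≤ b j + ρ ω₂ * k j) → ∀ j, g x z j ≤ b j) →
        f (xtilde ω₂) ≤ f x))
    (hmeas : Measurable fun ω₂ : Ω₂ => P {ω | ∀ j, g (xtilde ω₂) (ξ ω) j ≤ b j}) :
    (ENNReal.ofReal (1 - δ) ≤
      P₂ {ω₂ | ENNReal.ofReal (1 - ε) ≤ P {ω | ∀ j, g (xtilde ω₂) (ξ ω) j ≤ b j}}) ∧
    (∀ ω₂ : Ω₂, ρ ω₂ ≤ 0 →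
      (∀ z : Fin m → ℝ,
        (∀ j, g xhat z j ≤ b j + ρ ω₂ * k j) → ∀ j, g xhat z j ≤ b j) ∧
      f (xtilde ω₂) ≤ f xhat) := by
  have hne : Nonempty (Fin l) := ⟨⟨0, hl⟩⟩
  set T : Ω → ℝ := fun ω => ⨆ j : Fin l, (g xhat (ξ ω) j - b j) / k j with hT
  have hbdd : ∀ ω, BddAbove (Set.range fun j : Fin l => (g xhat (ξ ω) j - b j) / k j) :=
    fun ω => Finite.bddAbove_range _
  have hset : ∀ t : ℝ, {ω | T ω ≤ t} = ⋂ j : Fin l, {ω | (g xhat (ξ ω) j - b j) / k j ≤ t} := by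
    intro t
    ext ω
    simp only [Set.mem_setOf_eq, Set.mem_iInter, hT]
    exact ciSup_le_iff (hbdd ω)
  have hms : ∀ t : ℝ, MeasurableSet {ω | T ω ≤ t} := by
    intro t
    rw [hset]
    exact MeasurableSet.iInter fun j =>
      measurableSet_le ((((hg xhat j).comp hξ).sub measurable_const).div_const _) measurable_const
  have hmono : ∀ {s t : ℝ}, s ≤ t → {ω | T ω ≤ s} ⊆ {ω | T ω ≤ t} :=
    fun hst ω hω => le_trans hω hst
  set S : Set ℝ := {t : ℝ | ENNReal.ofReal (1 - ε) ≤ P {ω | T ω ≤ t}} with hS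
  have hε1 : ENNReal.ofReal (1 - ε) < 1 := by
    rw [← ENNReal.ofReal_one]
    exact (ENNReal.ofReal_lt_ofReal_iff one_pos).mpr (by linarith [hε.1])
  have hε0 : (0 : ENNReal) < ENNReal.ofReal (1 - ε) := ENNReal.ofReal_pos.mpr (by linarith [hε.2])
  -- S nonempty
  have hSne : S.Nonempty := by
    have hU : (⋃ n : ℕ, {ω | T ω ≤ (n : ℝ)}) = Set.univ := by
      ext ω
      simp only [Set.mem_iUnion, Set.mem_setOf_eq, Set.mem_univ, iff_true]
      obtain ⟨n, hn⟩ := exists_nat_ge (T ω)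
      exact ⟨n, hn⟩
    have htend := tendsto_measure_iUnion_atTop (μ := P)
      (s := fun n : ℕ => {ω | T ω ≤ (n : ℝ)})
      (fun a b hab => hmono (Nat.cast_le.mpr hab))
    rw [hU, measure_univ] at htend
    obtain ⟨n, hn⟩ := (htend.eventually (eventually_gt_nhds hε1)).exists
    exact ⟨n, le_of_lt hn⟩
  -- S bounded below
  have hSbdd : BddBelow S := by
    have hI : (⋂ n : ℕ, {ω | T ω ≤ -(n : ℝ)}) = ∅ := by
      ext ω
      simp only [Set.mem_iInter, Set.mem_setOf_eq, Set.mem_empty_iff_false, iff_false, not_forall]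
      obtain ⟨n, hn⟩ := exists_nat_gt (-(T ω))
      exact ⟨n, by push_neg; linarith⟩
    have htend := tendsto_measure_iInter_atTop (μ := P)
      (fun n : ℕ => (hms (-(n : ℝ))).nullMeasurableSet)
      (fun a b hab => hmono (by exact_mod_cast neg_le_neg (Nat.cast_le.mpr hab)))
      ⟨0, measure_ne_top _ _⟩
    rw [hI, measure_empty] at htend
    obtain ⟨n, hn⟩ := (htend.eventually (eventually_lt_nhds hε0)).exists
    refine ⟨-(n : ℝ), fun t ht => ?_⟩
    by_contra hlt
    push_neg at hlt
    exact absurd (le_trans ht (measure_mono (hmono hlt.le))) (not_le.mpr hn)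
  -- quantile is attained: P {T ≤ q} ≥ 1 - ε
  have hq' : ENNReal.ofReal (1 - ε) ≤ P {ω | T ω ≤ q} := by
    have hIq : (⋂ n : ℕ, {ω | T ω ≤ q + 1 / (n + 1)}) = {ω | T ω ≤ q} := by
      ext ω
      simp only [Set.mem_iInter, Set.mem_setOf_eq]
      constructor
      · intro h
        by_contra hlt
        push_neg at hlt
        obtain ⟨n, hn⟩ := exists_nat_one_div_lt (by linarith : (0:ℝ) < T ω - q)
        exact absurd (h n) (by push_neg; linarith)
      · intro h n
        have : (0:ℝ) < 1 / ((n:ℝ) + 1) := by positivity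
        linarith
    have htend := tendsto_measure_iInter_atTop (μ := P)
      (fun n : ℕ => (hms (q + 1 / (n + 1))).nullMeasurableSet)
      (fun a b hab => hmono (by
        have : (1:ℝ) / ((b:ℝ) + 1) ≤ 1 / ((a:ℝ) + 1) := by
          apply one_div_le_one_div_of_le (by positivity)
          exact_mod_cast add_le_add_left (Nat.cast_le.mpr hab) 1
        linarith))
      ⟨0, measure_ne_top _ _⟩
    rw [hIq] at htend
    refine ge_of_tendsto' htend fun n => ?_
    have hq_lt : sInf S < q + 1 / ((n:ℝ) + 1) := by
      rw [← hq]
      have : (0:ℝ) < 1 / ((n:ℝ) + 1) := by positivity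
      linarith
    obtain ⟨t, htS, htlt⟩ := (csInf_lt_iff hSbdd hSne).mp hq_lt
    exact le_trans htS (measure_mono (hmono htlt.le))
  -- part (b)
  have hb : ∀ ω₂ : Ω₂, ρ ω₂ ≤ 0 →
      (∀ z : Fin m → ℝ, (∀ j, g xhat z j ≤ b j + ρ ω₂ * k j) → ∀ j, g xhat z j ≤ b j) ∧
      f (xtilde ω₂) ≤ f xhat := by
    intro ω₂ hρ0
    have hfeas : ∀ z : Fin m → ℝ, (∀ j, g xhat z j ≤ b j + ρ ω₂ * k j) → ∀ j, g xhat z j ≤ b j := by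
      intro z hz j
      have := hz j
      nlinarith [hk j]
    exact ⟨hfeas, (hopt ω₂).2 xhat hfeas⟩
  refine ⟨?_, hb⟩
  -- part (a)
  refine le_trans hρ (measure_mono ?_)
  intro ω₂ hω₂
  simp only [Set.mem_setOf_eq] at hω₂ ⊢
  refine le_trans hq' (le_trans (measure_mono (hmono hω₂)) (measure_mono ?_))
  intro ω hω
  simp only [Set.mem_setOf_eq] at hω ⊢
  refine (hopt ω₂).1 (ξ ω) (fun j => ?_)
  have hle : (g xhat (ξ ω) j - b j) / k j ≤ ρ ω₂ :=
    le_trans (le_ciSup (hbdd ω) j) hω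
  have := (div_le_iff₀ (hk j)).mp hle
  linarith
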